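/- Let (k1,k2,q1,q2) be an integer quadruple with min(k1,k2) ≥ 2, 0 < q1 < k1, 0 < q2 < k2, and k1·k2 − k1·q2 − k2·q1 = 1. Then there exists a unique quadruple of integers (q3,q4,m1,m2) with m1 ≥ 0, m2 ≥ 0, 0 < q3 < k1 + k2, 0 < q4 < k1·k2 such that k1·k2·(k1+k2) − k1·k2·q3 − q4·(k1+k2) = 1 and q4 = k1·m1 + q1 = k2·m2 + q2. -/
import Mathlib


theorem stmt10 (k1 k2 q1 q2 : ℤ) (hmin : 2 ≤ min k1 k2)
    (hq1 : 0 < q1) (hq1' : q1 < k1) (hq2 : 0 < q2) (hq2' : q2 < k2)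
    (heq : k1 * k2 - k1 * q2 - k2 * q1 = 1) :
    ∃! t : ℤ × ℤ × ℤ × ℤ,
      0 ≤ t.2.2.1 ∧ 0 ≤ t.2.2.2 ∧ 0 < t.1 ∧ t.1 < k1 + k2 ∧
      0 < t.2.1 ∧ t.2.1 < k1 * k2 ∧
      k1 * k2 * (k1 + k2) - k1 * k2 * t.1 - t.2.1 * (k1 + k2) = 1 ∧
      t.2.1 = k1 * t.2.2.1 + q1 ∧ t.2.1 = k2 * t.2.2.2 + q2 := by
  obtain ⟨hk1, hk2⟩ := le_min_iff.mp hmin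
  have hk1' : (0:ℤ) < k1 := by linarith
  have hk2' : (0:ℤ) < k2 := by linarith
  have hkk : (0:ℤ) < k1 * k2 := mul_pos hk1' hk2'
  have hkkne : k1 * k2 ≠ 0 := ne_of_gt hkk
  have hcop : IsCoprime k1 k2 := ⟨k2 - q2, -q1, by linarith [heq]⟩
  obtain ⟨q4, hq4def⟩ : ∃ q4 : ℤ, q4 = (-(k2 * q1 ^ 2 + k1 * q2 ^ 2)) % (k1 * k2) := ⟨_, rfl⟩
  have hq4nn : 0 ≤ q4 := by rw [hq4def]; exact Int.emod_nonneg _ hkkne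
  have hq4lt : q4 < k1 * k2 := by rw [hq4def]; exact Int.emod_lt_of_pos _ hkk
  have hqa : k1 * k2 ∣ q4 - (-(k2 * q1 ^ 2 + k1 * q2 ^ 2)) :=
    ⟨-((-(k2 * q1 ^ 2 + k1 * q2 ^ 2)) / (k1 * k2)), by rw [hq4def, Int.emod_def]; ring⟩
  have hd1 : k1 ∣ q4 - q1 := by
    have h1 : k1 ∣ (-(k2 * q1 ^ 2 + k1 * q2 ^ 2)) - q1 :=
      ⟨-q1 * (k2 - q2) - q2 ^ 2, by nlinarith [heq]⟩
    have h2 : k1 ∣ q4 - (-(k2 * q1 ^ 2 + k1 * q2 ^ 2)) := (dvd_mul_right k1 k2).trans hqa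
    have := dvd_add h2 h1
    simpa using this
  have hd2 : k2 ∣ q4 - q2 := by
    have h1 : k2 ∣ (-(k2 * q1 ^ 2 + k1 * q2 ^ 2)) - q2 :=
      ⟨-q2 * (k1 - q1) - q1 ^ 2, by nlinarith [heq]⟩
    have h2 : k2 ∣ q4 - (-(k2 * q1 ^ 2 + k1 * q2 ^ 2)) := (dvd_mul_left k2 k1).trans hqa
    have := dvd_add h2 h1
    simpa using this
  have hq4pos : 0 < q4 := by
    rcases lt_or_eq_of_le hq4nn with h | h
    · exact h
    · exfalso
      have : k1 ∣ q1 := by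
        have := (dvd_neg).mpr hd1
        rw [← h] at this
        simpa using this
      have := Int.le_of_dvd hq1 this
      linarith
  obtain ⟨m1, hm1⟩ := hd1
  obtain ⟨m2, hm2⟩ := hd2
  have hm1nn : 0 ≤ m1 := by nlinarith
  have hm2nn : 0 ≤ m2 := by nlinarith
  have hdd : k1 * k2 ∣ 1 + q4 * (k1 + k2) := by
    apply hcop.mul_dvd
    · exact ⟨k2 - q2 + k2 * m1 + q4, by nlinarith [heq]⟩
    · exact ⟨k1 - q1 + k1 * m2 + q4, by nlinarith [heq]⟩
  obtain ⟨c, hc⟩ := hdd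
  have hcpos : 0 < c := by nlinarith
  have hclt : c < k1 + k2 := by nlinarith
  refine ⟨(k1 + k2 - c, q4, m1, m2), ⟨hm1nn, hm2nn, show (0:ℤ) < k1 + k2 - c by linarith,
    show k1 + k2 - c < k1 + k2 by linarith, hq4pos, hq4lt,
    show k1 * k2 * (k1 + k2) - k1 * k2 * (k1 + k2 - c) - q4 * (k1 + k2) = 1 by linarith,
    show q4 = k1 * m1 + q1 by linarith, show q4 = k2 * m2 + q2 by linarith⟩, ?_⟩
  rintro ⟨q3', q4', m1', m2'⟩ ⟨h1, h2, h3, h4, h5, h6, h7, h8, h9⟩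
  simp only at h1 h2 h3 h4 h5 h6 h7 h8 h9
  have hq4eq : q4' = q4 := by
    have d1 : k1 ∣ q4' - q4 := ⟨m1' - m1, by linarith⟩
    have d2 : k2 ∣ q4' - q4 := ⟨m2' - m2, by linarith⟩
    obtain ⟨e, he⟩ := hcop.mul_dvd d1 d2
    have he1 : e < 1 := by
      have h : k1 * k2 * e < k1 * k2 * 1 := by rw [mul_one]; linarith
      exact lt_of_mul_lt_mul_left h (le_of_lt hkk)
    have he2 : -1 < e := by
      have h : k1 * k2 * (-1) < k1 * k2 * e := by
        have : k1 * k2 * (-1) = -(k1 * k2) := by ring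
        rw [this]; linarith
      exact lt_of_mul_lt_mul_left h (le_of_lt hkk)
    have : e = 0 := by omega
    rw [this] at he; linarith
  have hm1eq : m1' = m1 := by
    have : k1 * m1' = k1 * m1 := by linarith
    exact mul_left_cancel₀ (ne_of_gt hk1') this
  have hm2eq : m2' = m2 := by
    have : k2 * m2' = k2 * m2 := by linarith
    exact mul_left_cancel₀ (ne_of_gt hk2') this
  have hq3eq : q3' = k1 + k2 - c := by
    have : k1 * k2 * q3' = k1 * k2 * (k1 + k2 - c) := by
      rw [hq4eq] at h7; linarith
    exact mul_left_cancel₀ hkkne this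
  simp [Prod.ext_iff, hq4eq, hm1eq, hm2eq, hq3eq]
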